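/- Let (X, ρ) be a finite metric space with diam(X) = 1, and suppose that for every triple {x,y,z} ⊆ X we have ρ(x,y) ≤ max{ρ(x,z), ρ(z,y)} + 2ε. Let T be a minimum spanning tree of the complete weighted graph on X with weights ρ, and let δ(x,y) be the maximum edge weight on the x–y path in T. Then for all x, y ∈ X whose connecting path in T has at most 2^i edges, ρ(x,y) ≤ δ(x,y) + 2iε. Consequently, for all x, y ∈ X, |ρ(x,y) − δ(x,y)| ≤ 2ε·⌈log₂ n⌉ where n = |X|. -/

import Mathlib

private lemma foldr_max_nonneg (l : List ℝ) : 0 ≤ l.foldr max 0 := by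
  induction l with
  | nil => simp
  | cons a l ih => exact le_max_of_le_right ih

private lemma foldr_max_le {l : List ℝ} {c : ℝ} (h0 : 0 ≤ c) (h : ∀ a ∈ l, a ≤ c) :
    l.foldr max 0 ≤ c := by
  induction l with
  | nil => simpa
  | cons a l ih =>
    exact max_le (h a List.mem_cons_self) (ih fun b hb => h b (List.mem_cons_of_mem _ hb))

private lemma left_le_foldr_max (l1 l2 : List ℝ) :
    l1.foldr max 0 ≤ (l1 ++ l2).foldr max 0 := by
  induction l1 with
  | nil => simpa using foldr_max_nonneg l2
  | cons a l ih => exact max_le_max le_rfl ih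

private lemma right_le_foldr_max (l1 l2 : List ℝ) :
    l2.foldr max 0 ≤ (l1 ++ l2).foldr max 0 := by
  induction l1 with
  | nil => simp
  | cons a l ih => exact ih.trans (le_max_right _ _)

private lemma walk_split {V : Type*} {G : SimpleGraph V} (n : ℕ) :
    ∀ {x y : V} (p : G.Walk x y), ∃ (u : V) (p1 : G.Walk x u) (p2 : G.Walk u y),
      p = p1.append p2 ∧ p1.length = min n p.length := by
  induction n with
  | zero => exact fun {x y} p => ⟨x, .nil, p, by simp, by simp⟩
  | succ n ih =>
    intro x y p
    cases p with
    | nil => exact ⟨x, .nil, .nil, by simp, by simp⟩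
    | cons h q =>
      obtain ⟨u, p1, p2, h1, h2⟩ := ih q
      refine ⟨u, .cons h p1, p2, by simp [h1], ?_⟩
      simp only [SimpleGraph.Walk.length_cons, h2]
      omega

open scoped Classical in
/-- Distortion bound for the ultrametric induced by an MST, under the approximate
three-point condition. -/
theorem stmt7 {X : Type*} [Fintype X] [MetricSpace X]
    (ε : ℝ) (hε : 0 ≤ ε)
    (hdiam_le : ∀ x y : X, dist x y ≤ 1)
    (hdiam_eq : ∃ x y : X, dist x y = 1)
    (htriple : ∀ x y z : X, dist x y ≤ max (dist x z) (dist z y) + 2 * ε)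
    (T : SimpleGraph X) (hT : T.IsTree)
    (hmin : ∀ T' : SimpleGraph X, T'.IsTree →
      ∑ e ∈ T.edgeFinset, Sym2.lift ⟨dist, fun a b => dist_comm a b⟩ e ≤
        ∑ e ∈ T'.edgeFinset, Sym2.lift ⟨dist, fun a b => dist_comm a b⟩ e)
    (δ : X → X → ℝ)
    (hδ : ∀ x y : X, ∀ p : T.Path x y,
      δ x y = ((p : T.Walk x y).edges.map
        (Sym2.lift ⟨dist, fun a b => dist_comm a b⟩)).foldr max 0) :
    (∀ (i : ℕ) (x y : X), ∀ p : T.Path x y, (p : T.Walk x y).length ≤ 2 ^ i →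
      dist x y ≤ δ x y + 2 * i * ε) ∧
    (∀ x y : X,
      |dist x y - δ x y| ≤ 2 * ε * (Nat.clog 2 (Fintype.card X) : ℝ)) := by
  set f : Sym2 X → ℝ := Sym2.lift ⟨dist, fun a b => dist_comm a b⟩ with hf
  have key : ∀ (i : ℕ) (x y : X) (q : T.Walk x y), q.IsPath → q.length ≤ 2 ^ i →
      dist x y ≤ δ x y + 2 * i * ε := by
    intro i
    induction i with
    | zero =>
      intro x y q hq hlen
      have hd := hδ x y ⟨q, hq⟩
      cases q with
      | nil =>
        simp only [SimpleGraph.Walk.edges_nil, List.map_nil, List.foldr_nil] at hd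
        simp [hd]
      | cons h r =>
        cases r with
        | nil =>
          simp only [SimpleGraph.Walk.edges_cons, SimpleGraph.Walk.edges_nil,
            List.map_cons, List.map_nil, List.foldr_cons, List.foldr_nil] at hd
          have : f s(x, y) = dist x y := by simp [hf]
          rw [this, max_eq_left dist_nonneg] at hd
          simp [hd]
        | cons h2 r2 =>
          simp only [SimpleGraph.Walk.length_cons, pow_zero] at hlen
          omega
    | succ i ih =>
      intro x y q hq hlen
      by_cases hle : q.length ≤ 2 ^ i
      · have h := ih x y q hq hle
        have : 2 * (i : ℝ) * ε ≤ 2 * ((i : ℕ) + 1 : ℕ) * ε := by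
          push_cast; nlinarith
        push_cast at this ⊢
        push_cast at h
        linarith
      · obtain ⟨u, p1, p2, heq, hl1⟩ := walk_split (2 ^ i) q
        subst heq
        have hp1 : p1.IsPath := hq.of_append_left
        have hp2 : p2.IsPath := hq.of_append_right
        have hlapp : (p1.append p2).length = p1.length + p2.length :=
          SimpleGraph.Walk.length_append _ _
        have h2i : (2 : ℕ) ^ (i + 1) = 2 ^ i + 2 ^ i := by rw [pow_succ]; ring
        have hl1' : p1.length ≤ 2 ^ i := by omega
        have hl2 : p2.length ≤ 2 ^ i := by omega
        have h1 := ih x u p1 hp1 hl1'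
        have h2 := ih u y p2 hp2 hl2
        have e1 : δ x u = (p1.edges.map f).foldr max 0 := hδ x u ⟨p1, hp1⟩
        have e2 : δ u y = (p2.edges.map f).foldr max 0 := hδ u y ⟨p2, hp2⟩
        have e0 : δ x y = (p1.edges.map f ++ p2.edges.map f).foldr max 0 := by
          have h0 := hδ x y ⟨p1.append p2, hq⟩
          rwa [SimpleGraph.Walk.edges_append, List.map_append] at h0
        have d1 : δ x u ≤ δ x y := by
          rw [e1, e0]; exact left_le_foldr_max _ _
        have d2 : δ u y ≤ δ x y := by
          rw [e2, e0]; exact right_le_foldr_max _ _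
        have ht := htriple x y u
        have hm : max (dist x u) (dist u y) ≤ δ x y + 2 * i * ε :=
          max_le (by linarith) (by linarith)
        push_cast
        push_cast at hm
        linarith
  refine ⟨fun i x y p h => key i x y p p.2 h, ?_⟩
  intro x y
  obtain ⟨q, hq, -⟩ := hT.existsUnique_path x y
  have hlen : q.length < Fintype.card X := hq.length_lt
  have hcard : Fintype.card X ≤ 2 ^ Nat.clog 2 (Fintype.card X) :=
    Nat.le_pow_clog (by norm_num) _
  have h1 : dist x y ≤ δ x y + 2 * (Nat.clog 2 (Fintype.card X) : ℝ) * ε := by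
    have := key (Nat.clog 2 (Fintype.card X)) x y q hq (by omega)
    push_cast at this ⊢
    linarith
  -- MST cycle property: every edge weight on the path is at most `dist x y`.
  have hw : ∀ a b : X, s(a, b) ∈ q.edges → ¬ dist x y < dist a b := by
    intro a b hab hlt
    have hxyne : x ≠ y := by
      rintro rfl
      rw [SimpleGraph.Walk.isPath_iff_eq_nil] at hq
      subst hq
      simp at hab
    have heS : s(a, b) ∈ T.edgeSet := q.edges_subset_edgeSet hab
    by_cases hadj : T.Adj x y
    · have hps : (⟨q, hq⟩ : T.Path x y) = SimpleGraph.Path.singleton hadj :=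
        hT.IsAcyclic.path_unique _ _
      have hq' : q = SimpleGraph.Walk.cons hadj .nil := congrArg Subtype.val hps
      rw [hq'] at hab
      simp only [SimpleGraph.Walk.edges_cons, SimpleGraph.Walk.edges_nil,
        List.mem_cons, List.not_mem_nil, or_false] at hab
      rw [Sym2.eq_iff] at hab
      rcases hab with ⟨rfl, rfl⟩ | ⟨rfl, rfl⟩
      · exact lt_irrefl _ hlt
      · rw [dist_comm] at hlt; exact lt_irrefl _ hlt
    · have hns : s(x, y) ∉ T.edgeSet := fun h => hadj (T.mem_edgeSet.mp h)
      set S : Set (Sym2 X) := (T.edgeSet \ {s(a, b)}) ∪ {s(x, y)} with hS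
      set T' := SimpleGraph.fromEdgeSet S with hT'def
      -- no reachability between x and y after deleting the edge
      have noReach : ¬ (T.deleteEdges {s(a, b)}).Reachable x y := by
        rintro ⟨w⟩
        have hwe : ∀ e ∈ w.edges, e ∈ T.edgeSet := fun e he' =>
          SimpleGraph.edgeSet_mono (SimpleGraph.deleteEdges_le _) (w.edges_subset_edgeSet he')
        have hne : s(a, b) ∉ w.edges := by
          intro hmem
          have := w.edges_subset_edgeSet hmem
          rw [SimpleGraph.mem_edgeSet, SimpleGraph.deleteEdges_adj] at this
          exact this.2 rfl
        set w' : T.Walk x y := w.transfer T hwe with hw'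
        have hPeq : w'.toPath = (⟨q, hq⟩ : T.Path x y) := hT.IsAcyclic.path_unique _ _
        have hab' : s(a, b) ∈ (w'.toPath : T.Walk x y).edges := by
          rw [show ((w'.toPath : T.Walk x y)) = q from congrArg Subtype.val hPeq]
          exact hab
        have := SimpleGraph.Walk.edges_toPath_subset w' hab'
        rw [hw', SimpleGraph.Walk.edges_transfer] at this
        exact hne this
      -- every vertex reaches a or b after deleting the edge
      have reach : ∀ v : X, (T.deleteEdges {s(a, b)}).Reachable v a ∨
          (T.deleteEdges {s(a, b)}).Reachable v b := by
        intro v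
        obtain ⟨w0⟩ := hT.isConnected.preconnected v a
        by_cases hm : s(a, b) ∈ (w0.toPath : T.Walk v a).edges
        · right
          have hrev : (w0.toPath : T.Walk v a).reverse.IsPath := w0.toPath.2.reverse
          have hm' : s(a, b) ∈ (w0.toPath : T.Walk v a).reverse.edges := by
            rw [SimpleGraph.Walk.edges_reverse]; exact List.mem_reverse.mpr hm
          obtain ⟨r, hrp, hre⟩ : ∃ r : T.Walk a v, r.IsPath ∧ s(a, b) ∈ r.edges :=
            ⟨_, hrev, hm'⟩
          cases r with
          | nil => simp at hre
          | cons hadj' r' =>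
            rename_i c
            rw [SimpleGraph.Walk.cons_isPath_iff] at hrp
            rw [SimpleGraph.Walk.edges_cons, List.mem_cons] at hre
            rcases hre with hre | hre
            · have hcb : b = c := Sym2.congr_right.mp hre
              subst hcb
              have hnm : s(a, b) ∉ r'.edges := fun hc =>
                hrp.2 (r'.fst_mem_support_of_mem_edges hc)
              exact ⟨(SimpleGraph.Walk.toDeleteEdge _ r' hnm).reverse⟩
            · exact absurd (r'.fst_mem_support_of_mem_edges hre) hrp.2
        · exact Or.inl ⟨SimpleGraph.Walk.toDeleteEdge _ _ hm⟩
      have hle : T.deleteEdges {s(a, b)} ≤ T' := by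
        intro u w h
        rw [SimpleGraph.deleteEdges_adj] at h
        exact (SimpleGraph.fromEdgeSet_adj _).mpr
          ⟨Or.inl ⟨T.mem_edgeSet.mpr h.1, h.2⟩, h.1.ne⟩
      have hT'adj : T'.Adj x y :=
        (SimpleGraph.fromEdgeSet_adj _).mpr ⟨Or.inr rfl, hxyne⟩
      -- connectivity of the exchanged graph
      have hWx : ∀ v : X, T'.Reachable v x := by
        have hyx : T'.Reachable y x := hT'adj.symm.reachable
        rcases reach x with hxa | hxb <;> rcases reach y with hya | hyb
        · exact (noReach (hxa.trans hya.symm)).elim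
        · have hax : T'.Reachable a x := (hxa.mono hle).symm
          have hbx : T'.Reachable b x := ((hyb.mono hle).symm).trans hyx
          intro v
          rcases reach v with h | h
          exacts [(h.mono hle).trans hax, (h.mono hle).trans hbx]
        · have hbx : T'.Reachable b x := (hxb.mono hle).symm
          have hax : T'.Reachable a x := ((hya.mono hle).symm).trans hyx
          intro v
          rcases reach v with h | h
          exacts [(h.mono hle).trans hax, (h.mono hle).trans hbx]
        · exact (noReach (hxb.trans hyb.symm)).elim
      have hconn : T'.Connected := by
        rw [SimpleGraph.connected_iff]
        exact ⟨fun u v => (hWx u).trans (hWx v).symm, ⟨x⟩⟩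
      -- acyclicity of the exchanged graph
      have hacyc : T'.IsAcyclic := by
        intro v c hc
        by_cases hm : s(x, y) ∈ c.edges
        · have hcyc := SimpleGraph.adj_and_reachable_delete_edges_iff_exists_cycle.mpr
            ⟨v, c, hc, hm⟩
          apply noReach
          refine hcyc.2.mono ?_
          intro u w h
          rw [SimpleGraph.deleteEdges, SimpleGraph.sdiff_adj, SimpleGraph.fromEdgeSet_adj,
            SimpleGraph.fromEdgeSet_adj] at h
          obtain ⟨⟨hmem, hne⟩, hnot⟩ := h
          have hnxy : s(u, w) ≠ s(x, y) := fun hcon => hnot ⟨Set.mem_singleton_iff.mpr hcon, hne⟩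
          rw [SimpleGraph.deleteEdges_adj]
          rcases hmem with hmem | hmem
          · exact ⟨T.mem_edgeSet.mp hmem.1, hmem.2⟩
          · exact absurd hmem hnxy
        · have hc' : ∀ e ∈ c.edges, e ∈ T.edgeSet := by
            intro e hce
            have hmem := c.edges_subset_edgeSet hce
            rw [hT'def, SimpleGraph.edgeSet_fromEdgeSet, Set.mem_diff] at hmem
            rcases hmem.1 with h' | h'
            · exact h'.1
            · exact absurd (h' ▸ hce) hm
          exact hT.IsAcyclic (c.transfer T hc') (hc.transfer hc')
      have hT'tree : T'.IsTree := ⟨hconn, hacyc⟩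
      -- weight comparison
      have hfin : T'.edgeFinset = insert s(x, y) (T.edgeFinset.erase s(a, b)) := by
        ext e
        simp only [SimpleGraph.mem_edgeFinset, Finset.mem_insert, Finset.mem_erase,
          hT'def, SimpleGraph.edgeSet_fromEdgeSet, Set.mem_diff, hS, Set.mem_union,
          Set.mem_diff, Set.mem_singleton_iff, Set.mem_setOf_eq]
        constructor
        · rintro ⟨h1 | h1, h2⟩
          · exact Or.inr ⟨h1.2, h1.1⟩
          · exact Or.inl h1
        · rintro (rfl | ⟨hne, hmem⟩)
          · exact ⟨Or.inr rfl, by simpa [Sym2.mk_isDiag_iff] using hxyne⟩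
          · exact ⟨Or.inl ⟨hmem, hne⟩, T.not_isDiag_of_mem_edgeSet hmem⟩
      have hxy_not : s(x, y) ∉ T.edgeFinset.erase s(a, b) := fun h =>
        hns (SimpleGraph.mem_edgeFinset.mp (Finset.mem_of_mem_erase h))
      have hab_fin : s(a, b) ∈ T.edgeFinset := SimpleGraph.mem_edgeFinset.mpr heS
      have hsum : ∑ e ∈ T'.edgeFinset, f e
          = f s(x, y) + (∑ e ∈ T.edgeFinset, f e - f s(a, b)) := by
        rw [hfin, Finset.sum_insert hxy_not, Finset.sum_erase_eq_sub hab_fin]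
      have hfxy : f s(x, y) = dist x y := by simp [hf]
      have hfab : f s(a, b) = dist a b := by simp [hf]
      have hlt2 : ∑ e ∈ T'.edgeFinset, f e < ∑ e ∈ T.edgeFinset, f e := by
        rw [hsum, hfxy, hfab]; linarith
      have hmin' := hmin T' hT'tree
      refine absurd ?_ (not_le.mpr hlt2)
      convert hmin' using 3
      rfl
  have h2 : δ x y ≤ dist x y := by
    rw [hδ x y ⟨q, hq⟩]
    refine foldr_max_le dist_nonneg ?_
    intro c hc
    rw [List.mem_map] at hc
    obtain ⟨e, he, rfl⟩ := hc
    induction e using Sym2.ind with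
    | _ a b =>
      have := hw a b he
      simpa [hf] using not_lt.mp this
  have hnn : 0 ≤ 2 * ε * (Nat.clog 2 (Fintype.card X) : ℝ) := by positivity
  rw [abs_sub_le_iff]
  constructor <;> linarith
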